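/- arXiv:2106.04339 — 2 statements merged into one kernel-verified Lean document; each statement's English description precedes it below -/
import Mathlib

section
/- Let R be a commutative ring with a derivation 𝓛 : R → R, and let ħ, t₁₃, t₂₃, t₁₂, t₂₂, t₁₀, t₁₁, t₂₁, q, p ∈ R with ħ invertible. Assume 𝓛 annihilates ħ, t₁₃, t₂₃, t₁₂, t₂₂, t₁₀, and that 𝓛(t₁₁) = ħ t₂₃, 𝓛(t₂₁) = ħ t₁₃. Assume further the first-order system: 𝓛(q) = −2p/ħ − (t₁₃+t₂₃)q² − (t₁₂+t₂₂)q − (t₁₁+t₂₁), and 𝓛(p) = (2(t₁₃+t₂₃)q + t₁₂+t₂₂)·p + 4ħ t₁₃t₂₃ q³ + 3ħ(t₁₃t₂₂ + t₂₃t₁₂)q² + 2ħ(t₁₃t₂₁ + t₂₃t₁₁ + t₁₂t₂₂)q + ħ(t₁₂t₂₁ + t₁₁t₂₂ − (t₁₃−t₂₃)t₁₀) − ħ² t₂₃. Then 𝓛(𝓛(q)) = 2(t₁₃−t₂₃)² q³ + 3(t₁₃−t₂₃)(t₁₂−t₂₂) q² + ((t₁₂−t₂₂)² + 2(t₁₃−t₂₃)(t₁₁−t₂₁))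 q + (t₁₂−t₂₂)(t₁₁−t₂₁) + (2t₁₀−ħ)(t₁₃−t₂₃). -/
/-- The second-order evolution equation (pre-Painlevé 2) derived from the first-order
Hamiltonian system via the derivation `𝓛`. -/
theorem painleve2_second_order (R : Type*) [CommRing R] (L : R → R)
    (hadd : ∀ x y : R, L (x + y) = L x + L y)
    (hmul : ∀ x y : R, L (x * y) = L x * y + x * L y)
    (hbar : R) [Invertible hbar]
    (t13 t23 t12 t22 t10 t11 t21 q p : R)
    (hhbar0 : L hbar = 0) (h13 : L t13 = 0) (h23 : L t23 = 0) (h12 : L t12 = 0)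
    (h22 : L t22 = 0) (h10 : L t10 = 0)
    (h11 : L t11 = hbar * t23) (h21 : L t21 = hbar * t13)
    (hq : L q = -(2 * p * ⅟hbar) - (t13 + t23) * q ^ 2 - (t12 + t22) * q - (t11 + t21))
    (hp : L p = (2 * (t13 + t23) * q + t12 + t22) * p
        + 4 * hbar * t13 * t23 * q ^ 3 + 3 * hbar * (t13 * t22 + t23 * t12) * q ^ 2
        + 2 * hbar * (t13 * t21 + t23 * t11 + t12 * t22) * q
        + hbar * (t12 * t21 + t11 * t22 - (t13 - t23) * t10) - hbar ^ 2 * t23) :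
    L (L q) = 2 * (t13 - t23) ^ 2 * q ^ 3 + 3 * (t13 - t23) * (t12 - t22) * q ^ 2
      + ((t12 - t22) ^ 2 + 2 * (t13 - t23) * (t11 - t21)) * q
      + (t12 - t22) * (t11 - t21) + (2 * t10 - hbar) * (t13 - t23) := by
  have h1 : L 1 = 0 := by
    have h := hmul 1 1
    rw [one_mul, mul_one, one_mul] at h
    exact right_eq_add.mp h
  have h0 : L 0 = 0 := by
    have h := hadd 0 0
    rw [add_zero] at h
    exact right_eq_add.mp h
  have hneg : ∀ x : R, L (-x) = -L x := by
    intro x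
    have h := hadd x (-x)
    rw [add_neg_cancel, h0] at h
    linear_combination -h
  have hsub : ∀ x y : R, L (x - y) = L x - L y := by
    intro x y
    rw [sub_eq_add_neg, hadd, hneg]
    ring
  have h2 : L 2 = 0 := by
    have h := hadd 1 1
    rw [h1, one_add_one_eq_two] at h
    simpa using h
  have h3 : L 3 = 0 := by
    have h := hadd 2 1
    rw [h1, h2] at h
    norm_num at h
    exact h
  have h4 : L 4 = 0 := by
    have h := hadd 2 2
    rw [h2] at h
    norm_num at h
    exact h
  have hu : hbar * ⅟hbar = 1 := mul_invOf_self hbar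
  have hLu : L ⅟hbar = 0 := by
    have h := hmul hbar ⅟hbar
    rw [hu, h1, hhbar0, zero_mul, zero_add] at h
    have h' := congrArg (fun z => ⅟hbar * z) h.symm
    simpa [← mul_assoc, invOf_mul_self] using h'
  have hsq : ∀ x : R, L (x ^ 2) = 2 * x * L x := by
    intro x
    rw [sq, hmul]; ring
  have hcube : ∀ x : R, L (x ^ 3) = 3 * x ^ 2 * L x := by
    intro x
    rw [pow_succ, hmul, hsq]; ring
  rw [hq]
  simp only [hsub, hadd, hneg, hmul, hsq, hcube, hhbar0, h13, h23, h12, h22, h10,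
    h11, h21, hLu, h1, h2, h3, h4, hq, hp]
  linear_combination (-2 * (4 * t13 * t23 * q ^ 3 + 3 * (t13 * t22 + t23 * t12) * q ^ 2
    + 2 * (t13 * t21 + t23 * t11 + t12 * t22) * q
    + (t12 * t21 + t11 * t22 - (t13 - t23) * t10)) + 2 * hbar * t23) * hu
end

section
/- Let ħ, t₁₀, a, b, c ∈ ℂ with a ≠ 0, and let q : ℂ → ℂ be twice differentiable satisfying, for all τ, ħ² q''(τ) = 2a² q(τ)³ + 3ab q(τ)² + (b² − 2a²τ) q(τ) − abτ + (2t₁₀ − ħ)a. Let u ∈ ℂ be any cube root of −a/2 (u³ = −a/2), and define the change of variables τ(t) := −t/(2u²) − b²/(4a²) and q̃(t) := u·(q(τ(t)) + b/(2a)). Then q̃ satisfies the Painlevé 2 equation ħ² q̃''(t) = 2 q̃(t)³ + t·q̃(t) − (t₁₀ − ħ/2) for all t. -/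
/-- The rescaling turning the second-order evolution equation into the Painlevé 2
equation `hbar² q̃'' = 2q̃³ + t q̃ − (t₁₀ − hbar/2)`. -/
theorem painleve2_rescaling (hbar t10 a b c u : ℂ) (ha : a ≠ 0) (hu : u ^ 3 = -a / 2)
    (q : ℂ → ℂ) (hq1 : Differentiable ℂ q) (hq2 : Differentiable ℂ (deriv q))
    (heq : ∀ τ : ℂ, hbar ^ 2 * deriv (deriv q) τ =
      2 * a ^ 2 * q τ ^ 3 + 3 * a * b * q τ ^ 2 + (b ^ 2 - 2 * a ^ 2 * τ) * q τ
        - a * b * τ + (2 * t10 - hbar) * a)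
    (qt : ℂ → ℂ)
    (hqt : qt = fun t =>
      u * (q (-t / (2 * u ^ 2) - b ^ 2 / (4 * a ^ 2)) + b / (2 * a))) :
    ∀ t : ℂ, hbar ^ 2 * deriv (deriv qt) t = 2 * qt t ^ 3 + t * qt t - (t10 - hbar / 2) := by
  have hu0 : u ≠ 0 := by
    intro h
    apply ha
    rw [h] at hu
    simp at hu
    linear_combination 2 * hu
  set σ : ℂ → ℂ := fun t => -t / (2 * u ^ 2) - b ^ 2 / (4 * a ^ 2) with hσdef
  set m : ℂ := -1 / (2 * u ^ 2) with hm
  have hσ : ∀ t : ℂ, HasDerivAt σ m t := by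
    intro t
    have h1 : HasDerivAt (fun t : ℂ => -t / (2 * u ^ 2)) (-1 / (2 * u ^ 2)) t :=
      (hasDerivAt_id t).neg.div_const _
    exact h1.sub_const _
  have hdq : deriv qt = fun t => u * (deriv q (σ t) * m) := by
    funext t
    have : HasDerivAt qt (u * (deriv q (σ t) * m)) t := by
      rw [hqt]
      exact ((((hq1 (σ t)).hasDerivAt.comp t (hσ t)).add_const _).const_mul u)
    exact this.deriv
  have hddq : ∀ t : ℂ, deriv (deriv qt) t = u * (deriv (deriv q) (σ t) * m * m) := by
    intro t
    rw [hdq]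
    have : HasDerivAt (fun t => u * (deriv q (σ t) * m)) (u * (deriv (deriv q) (σ t) * m * m)) t := by
      exact ((((hq2 (σ t)).hasDerivAt.comp t (hσ t)).mul_const m).const_mul u)
    exact this.deriv
  intro t
  rw [hddq t, hqt]
  have E := heq (σ t)
  simp only [hσdef, hm]
  set Q : ℂ := q (-t / (2 * u ^ 2) - b ^ 2 / (4 * a ^ 2)) with hQ
  set D : ℂ := deriv (deriv q) (-t / (2 * u ^ 2) - b ^ 2 / (4 * a ^ 2)) with hD
  have E' : hbar ^ 2 * D =
      2 * a ^ 2 * Q ^ 3 + 3 * a * b * Q ^ 2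
        + (b ^ 2 - 2 * a ^ 2 * (-t / (2 * u ^ 2) - b ^ 2 / (4 * a ^ 2))) * Q
        - a * b * (-t / (2 * u ^ 2) - b ^ 2 / (4 * a ^ 2)) + (2 * t10 - hbar) * a := E
  field_simp at E' ⊢
  linear_combination (u ^ 4 / 2) * E' +
    (2 * a * (a - 2 * u ^ 3) * hbar ^ 2 * D + 4 * a ^ 2 * u ^ 3 * (2 * t10 - hbar)) * hu
end
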